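/- The coefficients λ_ℓ(θ) := α_ℓ(θ) + Σ_{m=0}^{ℓ} β_m(θ)/(ℓ-m)! satisfy λ_ℓ(θ) = θ^ℓ/ℓ! + Σ_{j ≥ 1, 2j ≤ ℓ} c_{2j} θ^{ℓ-2j}/(ℓ-2j)! where c_{2j} = 1/((2j+1)! 2^{2j}); in particular λ_0(θ)=1, λ_1(θ)=θ, λ_2(θ)=θ²/2 + 1/24, λ_3(θ)=θ³/6 + θ/24, λ_4(θ)=θ⁴/24 + θ²/48 + 1/1920. -/

import Mathlib

open MeasureTheory intervalIntegral

noncomputable def alphaCoef (l : ℕ) (θ : ℝ) : ℝ :=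
  (1 - (2*θ - 1)^(l+1)) / (2^(l+1) * (Nat.factorial (l+1)))

noncomputable def betaCoef (l : ℕ) (θ : ℝ) : ℝ :=
  ((2*θ - 1)^(l+1) - (-1 : ℝ)^(l+1)) / (2^(l+1) * (Nat.factorial (l+1)))

noncomputable def lambdaCoef (l : ℕ) (θ : ℝ) : ℝ :=
  alphaCoef l θ + ∑ m ∈ Finset.range (l+1), betaCoef m θ / (Nat.factorial (l - m))

theorem lambda_low_order (θ : ℝ) :
    lambdaCoef 0 θ = 1 ∧
    lambdaCoef 1 θ = θ ∧
    lambdaCoef 2 θ = θ^2/2 + 1/24 ∧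
    lambdaCoef 3 θ = θ^3/6 + θ/24 ∧
    lambdaCoef 4 θ = θ^4/24 + θ^2/48 + 1/1920 := by
  refine ⟨?_, ?_, ?_, ?_, ?_⟩ <;>
  · simp only [lambdaCoef, alphaCoef, betaCoef, Finset.sum_range_succ, Finset.sum_range_zero]
    norm_num [Nat.factorial]
    ring
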